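/- Let p ≥ 3 be an odd integer, set e_p := exp(2πi/p) and e_p^w := exp(2πi w/p) for w ∈ ℂ. Then for every λ ∈ ℂ and every natural number m with 0 ≤ m ≤ (p−3)/2: Σ_{n=0}^{p−1} ( e_p^{λ+2n+1} + e_p^{−(λ+2n+1)} − 2 ) · σ_m( e_p^{λ+2n+1}, e_p ) = −2p · (−1)^m · [2m+1 choose m]_{e_p} · e_p^{−m(m+1)/2}; in particular the left-hand side is independent of λ. -/

import Mathlib

/-- `e_p := exp(2πi/p)`. -/
noncomputable def ep (p : ℕ) : ℂ :=
  Complex.exp (2 * Real.pi * Complex.I / p)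

/-- `e_p^w := exp(2πi w / p)`. -/
noncomputable def epow (p : ℕ) (w : ℂ) : ℂ :=
  Complex.exp (2 * Real.pi * Complex.I * w / p)

/-- `σ_m(x,ζ) = ∏_{i=1}^{m} (x + x⁻¹ − ζ^i − ζ^{−i})`. -/
noncomputable def sigma' (m : ℕ) (x ζ : ℂ) : ℂ :=
  ∏ i ∈ Finset.Icc 1 m, (x + x⁻¹ - ζ ^ i - (ζ ^ i)⁻¹)

/-- Evaluation at `ζ : ℂ` of the Gaussian binomial coefficient `[n choose k]_q ∈ ℤ[q]`,
defined by the `q`-Pascal recursion, agreeing with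
`∏_{i=1}^{k} (1−q^{n−k+i})/(1−q^i)` for `k ≤ n` and with `0` for `k > n`. -/
def qbinom : ℕ → ℕ → ℂ → ℂ
  | _, 0, _ => 1
  | 0, _ + 1, _ => 0
  | n + 1, k + 1, ζ => qbinom n k ζ + ζ ^ (k + 1) * qbinom n (k + 1) ζ


lemma qbinom_zero (n : ℕ) (ζ : ℂ) : qbinom n 0 ζ = 1 := by cases n <;> rfl

lemma qbinom_succ_succ (n k : ℕ) (ζ : ℂ) :
    qbinom (n+1) (k+1) ζ = qbinom n k ζ + ζ ^ (k + 1) * qbinom n (k + 1) ζ := rfl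

lemma qbinom_of_lt (ζ : ℂ) : ∀ n k, n < k → qbinom n k ζ = 0 := by
  intro n
  induction n with
  | zero =>
    intro k hk
    match k, hk with
    | k+1, _ => rfl
  | succ n ih =>
    intro k hk
    match k, hk with
    | k+1, hk =>
      rw [qbinom_succ_succ, ih k (by omega), ih (k+1) (by omega)]
      ring

lemma qbinom_self (ζ : ℂ) : ∀ n, qbinom n n ζ = 1 := by
  intro n
  induction n with
  | zero => rfl
  | succ n ih =>
    rw [qbinom_succ_succ, ih, qbinom_of_lt ζ n (n+1) (by omega)]
    ring

lemma qbinom_one (ζ : ℂ) : ∀ n, qbinom n 1 ζ = ∑ i ∈ Finset.range n, ζ ^ i := by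
  intro n
  induction n with
  | zero => simp [qbinom]
  | succ n ih =>
    rw [qbinom_succ_succ, ih, qbinom_zero, geom_sum_succ]
    ring

lemma qbinom_pascal' (ζ : ℂ) : ∀ n k, k ≤ n →
    qbinom (n+1) (k+1) ζ = ζ^(n-k) * qbinom n k ζ + qbinom n (k+1) ζ := by
  intro n
  induction n with
  | zero =>
    intro k hk
    interval_cases k
    simp [qbinom_succ_succ, qbinom_zero, qbinom_of_lt ζ 0 1 (by omega)]
  | succ n ih =>
    intro k hk
    rcases Nat.eq_zero_or_pos k with rfl | hk0
    · rw [qbinom_succ_succ, qbinom_zero]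
      norm_num
      rw [qbinom_one]
      have h9 : (1:ℂ) + ζ * ∑ i ∈ Finset.range (n+1), ζ ^ i
          = ∑ i ∈ Finset.range (n+2), ζ ^ i := by
        conv_rhs => rw [geom_sum_succ]
        ring
      rw [h9, geom_sum_succ']
    · rcases k with _ | j
      · omega
      rcases Nat.lt_or_ge j n with hj | hj
      · -- j + 1 ≤ n : use IH twice
        conv_lhs => rw [qbinom_succ_succ, ih j (by omega), ih (j+1) (by omega)]
        conv_rhs => rw [qbinom_succ_succ, qbinom_succ_succ]
        rw [show n - j = (n - (j+1)) + 1 from by omega,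
          show n + 1 - (j + 1) = (n - (j+1)) + 1 from by omega]
        ring
      · -- j ≥ n, so j = n
        have hj' : j = n := by omega
        subst hj'
        rw [qbinom_succ_succ, qbinom_self, qbinom_of_lt ζ (j+1) (j+2) (by omega)]
        simp

lemma qbinom_symm (ζ : ℂ) : ∀ n k, k ≤ n → qbinom n k ζ = qbinom n (n - k) ζ := by
  intro n
  induction n with
  | zero => intro k hk; interval_cases k; rfl
  | succ n ih =>
    intro k hk
    rcases Nat.eq_zero_or_pos k with rfl | hk0
    · simp [qbinom_zero, qbinom_self]
    · rcases Nat.lt_or_ge k (n+1) with hkn | hkn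
      · rcases k with _ | j
        · omega
        have hjn : j + 1 ≤ n := by omega
        have h5 : n + 1 - (j + 1) = (n - (j+1)) + 1 := by omega
        rw [qbinom_succ_succ, h5, qbinom_pascal' ζ n (n - (j+1)) (by omega)]
        have h6 : n - (n - (j + 1)) = j + 1 := by omega
        have h7 : n - (j + 1) + 1 = n - j := by omega
        rw [h6, h7, ← ih (j+1) hjn, ih j (by omega)]
        ring
      · have : k = n + 1 := by omega
        subst this
        simp [qbinom_self, qbinom_zero]

noncomputable def qc (ζ : ℂ) (n k : ℕ) : ℂ :=
  (-1)^(n-k) * ζ^(Nat.choose (n-k) 2) * qbinom n k ζ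

lemma choose_two_succ (t : ℕ) : (t+1).choose 2 = t.choose 2 + t := by
  rw [Nat.choose_succ_succ, Nat.choose_one_right]
  show t + t.choose 2 = t.choose 2 + t
  omega

lemma qc_zero (ζ : ℂ) (N : ℕ) : qc ζ (N+1) 0 = -ζ^N * qc ζ N 0 := by
  unfold qc
  rw [Nat.sub_zero, Nat.sub_zero, choose_two_succ, qbinom_zero, qbinom_zero]
  ring

lemma qc_topzero (ζ : ℂ) (N : ℕ) : qc ζ N (N+1) = 0 := by
  unfold qc
  rw [qbinom_of_lt ζ N (N+1) (by omega)]
  ring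

lemma qc_rec (ζ : ℂ) (N k : ℕ) (hk : k ≤ N) :
    qc ζ (N+1) (k+1) = qc ζ N k - ζ^N * qc ζ N (k+1) := by
  rcases Nat.lt_or_ge k N with h | h
  · obtain ⟨t, rfl⟩ : ∃ t, N = t + (k+1) := ⟨N-(k+1), by omega⟩
    unfold qc
    rw [show t + (k+1) + 1 - (k+1) = t + 1 from by omega,
        show t + (k+1) - k = t + 1 from by omega,
        show t + (k+1) - (k+1) = t from by omega,
        qbinom_succ_succ, choose_two_succ]
    ring
  · have hkN : k = N := by omega
    subst hkN
    unfold qc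
    simp [Nat.sub_self, show k - (k+1) = 0 from by omega, qbinom_self,
      qbinom_of_lt ζ k (k+1) (by omega)]

lemma qb_expand (ζ : ℂ) : ∀ (N : ℕ) (y : ℂ),
    ∏ j ∈ Finset.range N, (y - ζ ^ j) =
    ∑ k ∈ Finset.range (N+1), qc ζ N k * y ^ k := by
  intro N
  induction N with
  | zero => intro y; simp [qc, qbinom_zero]
  | succ N ih =>
    intro y
    have hS1 : ∑ k ∈ Finset.range (N+1), qc ζ N (k+1) * y^(k+1)
        = (∑ k ∈ Finset.range (N+1), qc ζ N k * y^k) - qc ζ N 0 := by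
      rw [Finset.sum_range_succ, qc_topzero]
      conv_rhs => rw [Finset.sum_range_succ']
      simp
    rw [Finset.prod_range_succ, ih y]
    conv_rhs => rw [Finset.sum_range_succ']
    have hrec : ∀ k ∈ Finset.range (N+1), qc ζ (N+1) (k+1) * y^(k+1)
        = (qc ζ N k * y^k) * y - ζ^N * (qc ζ N (k+1) * y^(k+1)) := by
      intro k hk
      rw [Finset.mem_range] at hk
      rw [qc_rec ζ N k (by omega)]
      ring
    rw [Finset.sum_congr rfl hrec, Finset.sum_sub_distrib, ← Finset.sum_mul,
      ← Finset.mul_sum, hS1, qc_zero]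
    ring

lemma two_mul_choose_two (n : ℕ) : 2 * n.choose 2 = n * (n-1) := by
  induction n with
  | zero => rfl
  | succ k ih =>
    rw [choose_two_succ, Nat.add_sub_cancel]
    rcases k with _ | j
    · rfl
    · rw [Nat.add_sub_cancel] at ih
      zify at ih ⊢
      linear_combination ih

lemma sigma'_range (m : ℕ) (x ζ : ℂ) :
    sigma' m x ζ = ∏ i ∈ Finset.range m, (x + x⁻¹ - ζ ^ (i+1) - (ζ ^ (i+1))⁻¹) := by
  rw [sigma', ← Finset.Ico_add_one_right_eq_Icc, Finset.prod_Ico_eq_prod_range]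
  apply Finset.prod_congr rfl
  intro i _
  rw [Nat.add_comm 1 i]

lemma prod_split (m : ℕ) (ζ : ℂ) (hζ0 : ζ ≠ 0) (x : ℂ) :
    ∏ j ∈ Finset.range (2*m+1), (ζ^m * x - ζ^j)
      = ζ^(m*(2*m+1)) *
        ((x - 1) * ∏ i ∈ Finset.range m, ((x - ζ^(i+1)) * (x - (ζ^(i+1))⁻¹))) := by
  rw [show 2*m+1 = m + (m+1) from by omega, Finset.prod_range_add]
  have hc2 : ∏ i ∈ Finset.range (m+1), (ζ^m * x - ζ^(m+i))
      = ζ^(m*(m+1)) * ((x-1) * ∏ i ∈ Finset.range m, (x - ζ^(i+1))) := by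
    have h : ∀ i ∈ Finset.range (m+1), ζ^m * x - ζ^(m+i) = ζ^m * (x - ζ^i) := by
      intro i _; rw [pow_add]; ring
    rw [Finset.prod_congr rfl h, Finset.prod_mul_distrib, Finset.prod_const,
      Finset.card_range, ← pow_mul, Finset.prod_range_succ']
    simp only [pow_zero]
    ring
  have hc1 : ∏ j ∈ Finset.range m, (ζ^m * x - ζ^j)
      = ζ^(m*m) * ∏ i ∈ Finset.range m, (x - (ζ^(i+1))⁻¹) := by
    rw [← Finset.prod_range_reflect]
    have h : ∀ j ∈ Finset.range m, ζ^m * x - ζ^(m - 1 - j) = ζ^m * (x - (ζ^(j+1))⁻¹) := by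
      intro j hj
      rw [Finset.mem_range] at hj
      have h1 : ζ^(m-1-j) * ζ^(j+1) = ζ^m := by
        rw [← pow_add]; congr 1; omega
      have h2 : ζ^m * (ζ^(j+1))⁻¹ = ζ^(m-1-j) := by
        rw [← h1]; field_simp
      rw [← h2]; ring
    rw [Finset.prod_congr rfl h, Finset.prod_mul_distrib, Finset.prod_const,
      Finset.card_range, ← pow_mul]
  rw [hc1, hc2, Finset.prod_mul_distrib,
    show m*(m + (m+1)) = m*m + m*(m+1) from by ring, pow_add]
  ring

lemma factor_lhs (m : ℕ) (ζ : ℂ) (hζ0 : ζ ≠ 0) (x : ℂ) (hx : x ≠ 0) :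
    (x + x⁻¹ - 2) * sigma' m x ζ
      = (x⁻¹)^(m+1) * ((x - 1) *
          ((x - 1) * ∏ i ∈ Finset.range m, ((x - ζ^(i+1)) * (x - (ζ^(i+1))⁻¹)))) := by
  rw [sigma'_range]
  have hfac : ∀ i ∈ Finset.range m, x + x⁻¹ - ζ^(i+1) - (ζ^(i+1))⁻¹
      = x⁻¹ * ((x - ζ^(i+1)) * (x - (ζ^(i+1))⁻¹)) := by
    intro i _
    have hzi : ζ^(i+1) ≠ 0 := pow_ne_zero _ hζ0
    field_simp
    ring
  rw [Finset.prod_congr rfl hfac, Finset.prod_mul_distrib, Finset.prod_const,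
    Finset.card_range]
  have h2 : x + x⁻¹ - 2 = x⁻¹ * ((x-1)*(x-1)) := by field_simp; ring
  rw [h2, pow_succ]
  ring

lemma zpow_split (m : ℕ) (x : ℂ) (hx : x ≠ 0) (k : ℕ) :
    (x⁻¹)^(m+1) * ((x - 1) * x^k) = x ^ ((k:ℤ) - m) - x ^ ((k:ℤ) - m - 1) := by
  rw [zpow_sub₀ hx, zpow_sub₀ hx, zpow_sub₀ hx, zpow_natCast, zpow_natCast, zpow_one]
  rw [inv_pow, pow_succ]
  field_simp


theorem stmt9 (p : ℕ) (hp : 3 ≤ p) (hodd : Odd p) (lam : ℂ)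
    (m : ℕ) (hm : m ≤ (p - 3) / 2) :
    ∑ n ∈ Finset.range p,
        (epow p (lam + 2 * n + 1) + epow p (-(lam + 2 * n + 1)) - 2) *
          sigma' m (epow p (lam + 2 * n + 1)) (ep p) =
      -2 * p * (-1) ^ m * qbinom (2 * m + 1) m (ep p) * epow p (-((m : ℂ) * (m + 1)) / 2) := by
  have hp0 : (p:ℂ) ≠ 0 := Nat.cast_ne_zero.mpr (by omega)
  have hmp : m + 1 < p := by obtain ⟨t, ht⟩ := hodd; omega
  set ζ : ℂ := ep p with hζdef
  have hζ0 : ζ ≠ 0 := Complex.exp_ne_zero _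
  have hX0 : ∀ n : ℕ, epow p (lam + 2 * n + 1) ≠ 0 := fun n => Complex.exp_ne_zero _
  -- root of unity sums
  have hT : ∀ j : ℤ, j.natAbs < p →
      ∑ n ∈ Finset.range p, (epow p (lam + 2 * n + 1)) ^ j
        = if j = 0 then (p:ℂ) else 0 := by
    intro j hj
    have hXp : ∀ n : ℕ, (epow p (lam + 2 * n + 1)) ^ j
        = Complex.exp (2*Real.pi*Complex.I*(j*(lam+1))/p)
          * Complex.exp (2*Real.pi*Complex.I*(2*j)/p) ^ n := by
      intro n
      rw [epow, ← Complex.exp_int_mul, ← Complex.exp_nat_mul, ← Complex.exp_add]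
      congr 1
      field_simp
      ring
    rcases eq_or_ne j 0 with rfl | hj0
    · simp
    · rw [if_neg hj0, Finset.sum_congr rfl (fun n _ => hXp n), ← Finset.mul_sum]
      have hw1 : Complex.exp (2*Real.pi*Complex.I*(2*j)/p) ≠ 1 := by
        intro h
        rw [Complex.exp_eq_one_iff] at h
        obtain ⟨k, hk⟩ := h
        have h2 : (2*Real.pi*Complex.I) * (2*(j:ℂ)) = (2*Real.pi*Complex.I) * ((k:ℂ)*(p:ℂ)) := by
          field_simp at hk
          linear_combination (2*(Real.pi:ℂ)*Complex.I) * hk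
        have h3 := mul_left_cancel₀ Complex.two_pi_I_ne_zero h2
        have h4 : 2*j = k * (p:ℤ) := by exact_mod_cast h3
        have h5 : (p:ℤ) ∣ 2*j := ⟨k, by linarith⟩
        have h6 : IsCoprime (p:ℤ) 2 := by
          have hc : Nat.Coprime p 2 := hodd.coprime_two_right
          exact_mod_cast Nat.isCoprime_iff_coprime.mpr hc
        have h7 : (p:ℤ) ∣ j := h6.dvd_of_dvd_mul_left h5
        have h8 : p ∣ j.natAbs := by
          have := Int.natAbs_dvd_natAbs.mpr h7
          simpa using this
        have h9 : j.natAbs ≠ 0 := by simpa using hj0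
        have := Nat.le_of_dvd (Nat.pos_of_ne_zero h9) h8
        omega
      have hwp : Complex.exp (2*Real.pi*Complex.I*(2*j)/p) ^ p = 1 := by
        rw [← Complex.exp_nat_mul]
        have harg : (p:ℂ) * (2*Real.pi*Complex.I*(2*j)/p) = ((2*j : ℤ):ℂ) * (2*Real.pi*Complex.I) := by
          push_cast
          field_simp
        rw [harg, Complex.exp_int_mul_two_pi_mul_I]
      rw [geom_sum_eq hw1, hwp]
      simp
  -- pointwise expansion
  have step1 : ∀ n ∈ Finset.range p,
      (epow p (lam + 2 * n + 1) + epow p (-(lam + 2 * n + 1)) - 2) *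
          sigma' m (epow p (lam + 2 * n + 1)) ζ
      = ∑ k ∈ Finset.range (2*m+1+1),
          qc ζ (2*m+1) k * ζ^(m*k) * (ζ^(m*(2*m+1)))⁻¹ *
            ((epow p (lam + 2 * n + 1)) ^ ((k:ℤ) - m)
              - (epow p (lam + 2 * n + 1)) ^ ((k:ℤ) - m - 1)) := by
    intro n _
    set x : ℂ := epow p (lam + 2 * n + 1) with hxdef
    have hx : x ≠ 0 := hX0 n
    have hneg : epow p (-(lam + 2 * n + 1)) = x⁻¹ := by
      rw [hxdef, epow, epow, ← Complex.exp_neg]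
      congr 1
      ring
    rw [hneg, factor_lhs m ζ hζ0 x hx]
    have h4 : (x - 1) * ∏ i ∈ Finset.range m, ((x - ζ^(i+1)) * (x - (ζ^(i+1))⁻¹))
        = (ζ^(m*(2*m+1)))⁻¹ * ∑ k ∈ Finset.range (2*m+1+1), qc ζ (2*m+1) k * (ζ^m * x)^k := by
      rw [← qb_expand ζ (2*m+1) (ζ^m * x), prod_split m ζ hζ0 x,
        inv_mul_cancel_left₀ (pow_ne_zero _ hζ0)]
    rw [h4, Finset.mul_sum, Finset.mul_sum, Finset.mul_sum]
    apply Finset.sum_congr rfl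
    intro k _
    rw [← zpow_split m x hx k, mul_pow, ← pow_mul]
    ring
  rw [Finset.sum_congr rfl step1, Finset.sum_comm]
  have step2 : ∀ k ∈ Finset.range (2*m+1+1),
      ∑ n ∈ Finset.range p,
        qc ζ (2*m+1) k * ζ^(m*k) * (ζ^(m*(2*m+1)))⁻¹ *
          ((epow p (lam + 2 * n + 1)) ^ ((k:ℤ) - m)
            - (epow p (lam + 2 * n + 1)) ^ ((k:ℤ) - m - 1))
      = qc ζ (2*m+1) k * ζ^(m*k) * (ζ^(m*(2*m+1)))⁻¹ *
          ((if k = m then (p:ℂ) else 0) - (if k = m+1 then (p:ℂ) else 0)) := by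
    intro k hk
    rw [Finset.mem_range] at hk
    rw [← Finset.mul_sum, Finset.sum_sub_distrib,
      hT ((k:ℤ) - m) (by omega), hT ((k:ℤ) - m - 1) (by omega)]
    congr 2
    · exact if_congr (by omega) rfl rfl
    · exact if_congr (by omega) rfl rfl
  rw [Finset.sum_congr rfl step2]
  have step3 : ∑ k ∈ Finset.range (2*m+1+1),
      qc ζ (2*m+1) k * ζ^(m*k) * (ζ^(m*(2*m+1)))⁻¹ *
        ((if k = m then (p:ℂ) else 0) - (if k = m+1 then (p:ℂ) else 0))
      = qc ζ (2*m+1) m * ζ^(m*m) * (ζ^(m*(2*m+1)))⁻¹ * p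
        - qc ζ (2*m+1) (m+1) * ζ^(m*(m+1)) * (ζ^(m*(2*m+1)))⁻¹ * p := by
    simp only [mul_sub, mul_ite, mul_zero, Finset.sum_sub_distrib]
    rw [Finset.sum_ite_eq' (Finset.range (2*m+1+1)) m,
      Finset.sum_ite_eq' (Finset.range (2*m+1+1)) (m+1)]
    simp only [Finset.mem_range]
    rw [if_pos (by omega : m < 2*m+1+1), if_pos (by omega : m+1 < 2*m+1+1)]
  rw [step3]
  have hBsymm : qbinom (2*m+1) (m+1) ζ = qbinom (2*m+1) m ζ := by
    have h := qbinom_symm ζ (2*m+1) (m+1) (by omega)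
    rwa [show 2*m+1 - (m+1) = m from by omega] at h
  have hEeq : m*(2*m+1) = (m.choose 2 + m) + (m*m + (m.choose 2 + m)) := by
    have h2c := two_mul_choose_two m
    rcases m with _ | j
    · rfl
    · rw [Nat.add_sub_cancel] at h2c
      zify at h2c ⊢
      linear_combination -h2c
  have hpow1 : (ζ^(m*(2*m+1)))⁻¹
      = (ζ^(m.choose 2 + m))⁻¹ * ((ζ^(m*m))⁻¹ * (ζ^(m.choose 2 + m))⁻¹) := by
    rw [hEeq]
    simp only [pow_add, mul_inv]
  have harith : qc ζ (2*m+1) m * ζ^(m*m) * (ζ^(m*(2*m+1)))⁻¹ * (p:ℂ)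
        - qc ζ (2*m+1) (m+1) * ζ^(m*(m+1)) * (ζ^(m*(2*m+1)))⁻¹ * (p:ℂ)
      = -2 * (p:ℂ) * (-1)^m * qbinom (2*m+1) m ζ * (ζ^((m+1).choose 2))⁻¹ := by
    unfold qc
    rw [show 2*m+1 - m = m+1 from by omega, show 2*m+1 - (m+1) = m from by omega,
      hBsymm, choose_two_succ m, hpow1,
      show m*(m+1) = m*m + m from by ring]
    simp only [pow_add]
    set a := ζ ^ m.choose 2 with ha'
    set b := ζ ^ m with hb'
    set c := ζ ^ (m*m) with hc'
    have ha : a ≠ 0 := pow_ne_zero _ hζ0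
    have hb : b ≠ 0 := pow_ne_zero _ hζ0
    have hc : c ≠ 0 := pow_ne_zero _ hζ0
    field_simp
    ring
  rw [harith]
  have hepow_final : epow p (-((m:ℂ) * ((m:ℂ)+1)) / 2) = (ζ^((m+1).choose 2))⁻¹ := by
    have h := two_mul_choose_two (m+1)
    rw [Nat.add_sub_cancel] at h
    have h2c : ((m+1).choose 2 : ℂ) * 2 = (m:ℂ) * ((m:ℂ)+1) := by
      have h3 : ((2 * (m+1).choose 2 : ℕ) : ℂ) = (((m+1) * m : ℕ) : ℂ) := by
        exact_mod_cast congrArg (Nat.cast : ℕ → ℂ) h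
      push_cast at h3
      linear_combination h3
    rw [hζdef, ep, epow, ← Complex.exp_nat_mul, ← Complex.exp_neg]
    congr 1
    field_simp
    linear_combination h2c
  rw [hepow_final]
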